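/- Let q = p^t be a prime power, i a positive integer, α ∈ F_q nonzero, and β ∈ F_q. Then the polynomial X^(p^i) - αX - β has either zero, one, or p^d roots in F_q, where d = gcd(i, t). -/

import Mathlib

open Polynomial

/-- `gcd (a^m - 1) (a^n - 1) = a^(gcd m n) - 1`. -/
lemma gcd_pow_sub_one_aux (a : ℕ) : ∀ m n : ℕ,
    Nat.gcd (a ^ m - 1) (a ^ n - 1) = a ^ Nat.gcd m n - 1 := by
  intro m
  induction m using Nat.strong_induction_on with
  | _ m ih =>
    intro n
    rcases Nat.eq_zero_or_pos m with rfl | hm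
    · simp
    rcases Nat.lt_or_ge a 2 with ha | ha
    · have h0 : ∀ k : ℕ, a ^ k - 1 = 0 := by
        intro k
        have : a ^ k ≤ 1 := by
          calc a ^ k ≤ 1 ^ k := Nat.pow_le_pow_left (by omega) k
          _ = 1 := one_pow k
        omega
      simp [h0]
    · have key : (a ^ n - 1) % (a ^ m - 1) = (a ^ (n % m) - 1) % (a ^ m - 1) := by
        have h1 : a ^ m - 1 ∣ a ^ n - a ^ (n % m) := by
          have he : a ^ n = a ^ (n % m) * (a ^ m) ^ (n / m) := by
            rw [← pow_mul, ← pow_add]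
            congr 1
            rw [Nat.mod_add_div]
          rw [he]
          have he2 : a ^ (n % m) * (a ^ m) ^ (n / m) - a ^ (n % m)
              = a ^ (n % m) * ((a ^ m) ^ (n / m) - 1) := by
            rw [Nat.mul_sub, mul_one]
          rw [he2]
          exact Dvd.dvd.mul_left
            (by simpa using Nat.sub_dvd_pow_sub_pow (a ^ m) 1 (n / m)) _
        have h1' : 1 ≤ a ^ (n % m) := Nat.one_le_pow _ _ (by omega)
        have hle : a ^ (n % m) ≤ a ^ n := Nat.pow_le_pow_right (by omega) (Nat.mod_le n m)
        have h2 : (a ^ n - 1) - (a ^ (n % m) - 1) = a ^ n - a ^ (n % m) := by omega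
        have h3 : a ^ (n % m) - 1 ≡ a ^ n - 1 [MOD a ^ m - 1] :=
          (Nat.modEq_iff_dvd' (by omega)).2 (h2 ▸ h1)
        exact h3.symm
      calc Nat.gcd (a ^ m - 1) (a ^ n - 1)
          = Nat.gcd ((a ^ n - 1) % (a ^ m - 1)) (a ^ m - 1) := Nat.gcd_rec _ _
        _ = Nat.gcd ((a ^ (n % m) - 1) % (a ^ m - 1)) (a ^ m - 1) := by rw [key]
        _ = Nat.gcd (a ^ m - 1) (a ^ (n % m) - 1) := (Nat.gcd_rec _ _).symm
        _ = Nat.gcd (a ^ (n % m) - 1) (a ^ m - 1) := Nat.gcd_comm _ _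
        _ = a ^ Nat.gcd (n % m) m - 1 := ih _ (Nat.mod_lt n hm) m
        _ = a ^ Nat.gcd m n - 1 := by rw [← Nat.gcd_rec]

/-- Over `F_q` with `q = p^t`, the polynomial `X^(p^i) - αX - β`
(with `α ≠ 0`) has either zero, one, or `p^gcd(i,t)` roots. -/
theorem stmt_0 {F : Type*} [Field F] [Fintype F] (p t i : ℕ) (hp : p.Prime)
    (ht : 0 < t) (hi : 0 < i) (hcard : Fintype.card F = p ^ t)
    (α β : F) (hα : α ≠ 0) :
    Nat.card {x : F // x ^ (p ^ i) - α * x - β = 0} ∈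
      ({0, 1, p ^ Nat.gcd i t} : Set ℕ) := by
  classical
  -- characteristic
  obtain ⟨p', hp'⟩ := CharP.exists F
  haveI := hp'
  obtain ⟨n, hp'prime, hcard'⟩ := FiniteField.card F p'
  have hpp' : p' = p := by
    have h1 : p' ∣ p ^ t := by
      rw [← hcard, hcard']
      exact dvd_pow_self p' n.ne_zero
    exact (Nat.prime_dvd_prime_iff_eq hp'prime hp).mp (hp'prime.dvd_of_dvd_pow h1)
  haveI : CharP F p := by rwa [hpp'] at hp'
  haveI : Fact p.Prime := ⟨hp⟩
  have hp2 : 2 ≤ p := hp.two_le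
  set m := p ^ i - 1 with hm_def
  set N := p ^ t - 1 with hN_def
  set g := p ^ Nat.gcd i t - 1 with hg_def
  have hgcd : Nat.gcd m N = g := gcd_pow_sub_one_aux p i t
  have hpi1 : 2 ≤ p ^ i := by
    calc 2 = 2 ^ 1 := rfl
    _ ≤ p ^ i := Nat.pow_le_pow_left hp2 1 |>.trans (Nat.pow_le_pow_right (by omega) hi)
  have hm1 : 1 ≤ m := by omega
  have hpt1 : 2 ≤ p ^ t := by
    calc 2 = 2 ^ 1 := rfl
    _ ≤ p ^ t := Nat.pow_le_pow_left hp2 1 |>.trans (Nat.pow_le_pow_right (by omega) ht)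
  have hN1 : 1 ≤ N := by omega
  have hdt : 1 ≤ Nat.gcd i t := Nat.gcd_pos_of_pos_left t hi
  have hg1 : 1 ≤ g := by
    have : 2 ≤ p ^ Nat.gcd i t := by
      calc 2 = 2 ^ 1 := rfl
      _ ≤ p ^ Nat.gcd i t := Nat.pow_le_pow_left hp2 1 |>.trans
        (Nat.pow_le_pow_right (by omega) hdt)
    omega
  have hgm : g ∣ m := hgcd ▸ Nat.gcd_dvd_left m N
  have hmsucc : m + 1 = p ^ i := by omega
  -- case: no roots
  by_cases hS : ∃ x0 : F, x0 ^ (p ^ i) - α * x0 - β = 0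
  · obtain ⟨x0, hx0⟩ := hS
    -- translate roots to kernel of the additive map x ↦ x^(p^i) - α x
    have e : {x : F // x ^ (p ^ i) - α * x - β = 0} ≃ {x : F // x ^ (p ^ i) - α * x = 0} :=
      { toFun := fun x => ⟨x.1 - x0, by
          have h1 := x.2
          have hpow : (x.1 - x0) ^ (p ^ i) = x.1 ^ (p ^ i) - x0 ^ (p ^ i) :=
            sub_pow_char_pow x.1 x0 i
          rw [hpow]
          ring_nf
          linear_combination h1 - hx0⟩
        invFun := fun y => ⟨y.1 + x0, by
          have h1 := y.2
          have hpow : (y.1 + x0) ^ (p ^ i) = y.1 ^ (p ^ i) + x0 ^ (p ^ i) :=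
            add_pow_char_pow y.1 x0 p i
          rw [hpow]
          linear_combination h1 + hx0⟩
        left_inv := fun x => by ext; simp
        right_inv := fun y => by ext; simp }
    rw [Nat.card_congr e]
    -- the kernel set
    have hKset : {x : F | x ^ (p ^ i) - α * x = 0} = insert 0 {x : F | x ^ m = α} := by
      ext x
      simp only [Set.mem_setOf_eq, Set.mem_insert_iff]
      constructor
      · intro hx
        rcases eq_or_ne x 0 with rfl | hxne
        · exact Or.inl rfl
        · right
          have hx' : x ^ m * x = α * x := by
            rw [← pow_succ, hmsucc]
            linear_combination hx
          exact mul_right_cancel₀ hxne hx'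
      · rintro (rfl | hx)
        · rw [zero_pow (by omega : p ^ i ≠ 0)]
          ring
        · have : x ^ (p ^ i) = x ^ m * x := by rw [← pow_succ, hmsucc]
          rw [this, hx]
          ring
    have hcard_eq : Nat.card {x : F // x ^ (p ^ i) - α * x = 0}
        = ({x : F | x ^ (p ^ i) - α * x = 0} : Set F).ncard :=
      Nat.card_coe_set_eq _
    rw [hcard_eq, hKset]
    have h0notin : (0 : F) ∉ {x : F | x ^ m = α} := by
      simp only [Set.mem_setOf_eq]
      rw [zero_pow (by omega)]
      exact fun h => hα h.symm
    rw [Set.ncard_insert_of_notMem h0notin (Set.toFinite _)]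
    -- now count nonzero solutions of x^m = α
    by_cases hT : ∃ x1 : F, x1 ^ m = α
    · obtain ⟨x1, hx1⟩ := hT
      have hx1ne : x1 ≠ 0 := by
        intro h
        rw [h, zero_pow (by omega)] at hx1
        exact hα hx1.symm
      -- {x | x^m = α} = x1 • {y | y^g = 1}
      have himg : {x : F | x ^ m = α} = (fun y => x1 * y) '' {y : F | y ^ g = 1} := by
        ext x
        simp only [Set.mem_setOf_eq, Set.mem_image]
        constructor
        · intro hx
          refine ⟨x / x1, ?_, by field_simp⟩
          have hxne : x ≠ 0 := by
            intro h
            rw [h, zero_pow (by omega)] at hx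
            exact hα hx.symm
          have hyne : x / x1 ≠ 0 := div_ne_zero hxne hx1ne
          have hym : (x / x1) ^ m = 1 := by
            rw [div_pow, hx, hx1, div_self hα]
          have hyN : (x / x1) ^ N = 1 := by
            have := FiniteField.pow_card_sub_one_eq_one (x / x1) hyne
            rwa [hcard] at this
          have hdvd : orderOf (x / x1) ∣ g := by
            rw [← hgcd]
            exact Nat.dvd_gcd (orderOf_dvd_of_pow_eq_one hym)
              (orderOf_dvd_of_pow_eq_one hyN)
          exact orderOf_dvd_iff_pow_eq_one.mp hdvd
        · rintro ⟨y, hy, rfl⟩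
          have hym : y ^ m = 1 := by
            obtain ⟨k, hk⟩ := hgm
            rw [hk, pow_mul, hy, one_pow]
          rw [mul_pow, hx1, hym, mul_one]
      rw [himg, Set.ncard_image_of_injective _ (mul_right_injective₀ hx1ne)]
      -- count g-th roots of unity: there are exactly g of them
      obtain ⟨gU, hgU⟩ := IsCyclic.exists_generator (α := Fˣ)
      have hord : orderOf gU = Fintype.card Fˣ := by
        rw [orderOf_eq_card_of_forall_mem_zpowers hgU, Nat.card_eq_fintype_card]
      have hprim : IsPrimitiveRoot (gU : F) N := by
        have h1 : IsPrimitiveRoot gU (orderOf gU) := IsPrimitiveRoot.orderOf gU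
        rw [hord, Fintype.card_units, hcard] at h1
        exact IsPrimitiveRoot.coe_units_iff.mpr h1
      have hgN : g ∣ N := hgcd ▸ Nat.gcd_dvd_right m N
      obtain ⟨k, hk⟩ := hgN
      have hprimg : IsPrimitiveRoot ((gU : F) ^ k) g :=
        hprim.pow (by omega) (by rw [hk, mul_comm])
      have hU : {y : F | y ^ g = 1} = ↑(nthRootsFinset g (1 : F)) := by
        ext y
        simp [Polynomial.mem_nthRootsFinset (by omega : 0 < g) (1 : F)]
      rw [hU, Set.ncard_coe_finset, hprimg.card_nthRootsFinset]
      -- conclude: 1 + g = p ^ gcd i t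
      right; right
      simp only [Set.mem_singleton_iff]
      omega
    · -- no solution to x^m = α : exactly one root
      have hempty : {x : F | x ^ m = α} = ∅ := by
        ext x
        simp only [Set.mem_setOf_eq, Set.mem_empty_iff_false, iff_false]
        exact fun h => hT ⟨x, h⟩
      rw [hempty, Set.ncard_empty]
      right; left; rfl
  · -- no roots at all
    left
    rw [Nat.card_eq_zero]
    left
    constructor
    rintro ⟨x, hx⟩
    exact hS ⟨x, hx⟩
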